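/- There exists an infinite sequence π ∈ ({(9,1),(1,9)})^ω such that liminf of the Cesàro averages of the first coordinate of π is at most 2 and liminf of the Cesàro averages of the second coordinate of π is at most 2. -/

import Mathlib

open Filter Finset

noncomputable def piSeq (t : ℕ) : ℝ × ℝ :=
  if Even (Nat.log 9 (t + 1)) then (1, 9) else (9, 1)

lemma key (f : ℕ → ℝ) (m : ℕ) (hm : 1 ≤ m) (h9 : ∀ t, f t ≤ 9)
    (h1 : ∀ t, m ≤ t → t < 9 * m - 1 → f t = 1) :
    (∑ t ∈ Finset.range (9 * m - 1), f t) / ((9 * m - 1 : ℕ) : ℝ) ≤ 2 := by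
  set n := 9 * m - 1 with hn
  have hmn : m ≤ n := by omega
  have hnpos : 0 < n := by omega
  rw [div_le_iff₀ (by positivity)]
  have hsplit : ∑ t ∈ Finset.range n, f t =
      (∑ t ∈ Finset.range m, f t) + ∑ t ∈ Finset.Ico m n, f t := by
    rw [← Finset.sum_range_add_sum_Ico f hmn]
  have h1' : ∑ t ∈ Finset.Ico m n, f t = ((n - m : ℕ) : ℝ) := by
    have heq : ∀ t ∈ Finset.Ico m n, f t = 1 := by
      intro t ht
      rw [Finset.mem_Ico] at ht
      exact h1 t ht.1 ht.2
    rw [Finset.sum_congr rfl heq, Finset.sum_const, Nat.card_Ico]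
    simp
  have h9' : ∑ t ∈ Finset.range m, f t ≤ 9 * m := by
    calc ∑ t ∈ Finset.range m, f t ≤ ∑ _t ∈ Finset.range m, (9:ℝ) :=
          Finset.sum_le_sum (fun t _ => h9 t)
      _ = 9 * m := by simp [mul_comm]
  rw [hsplit, h1']
  have hnm : ((n - m : ℕ) : ℝ) = (n : ℝ) - m := Nat.cast_sub hmn
  have hnval : (n : ℝ) = 9 * m - 1 := by
    rw [hn]; push_cast [Nat.cast_sub (by omega : 1 ≤ 9 * m)]; ring
  have hm' : (1 : ℝ) ≤ m := by exact_mod_cast hm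
  rw [hnm, hnval]
  nlinarith

lemma pi_le9 (t : ℕ) : (piSeq t).1 ≤ 9 ∧ (piSeq t).2 ≤ 9 := by
  unfold piSeq; split <;> norm_num

lemma pi_eq {j t : ℕ} (h1 : 9 ^ j ≤ t + 1) (h2 : t + 1 < 9 ^ (j + 1)) :
    piSeq t = if Even j then ((1 : ℝ), (9 : ℝ)) else (9, 1) := by
  unfold piSeq
  rw [Nat.log_eq_of_pow_le_of_lt_pow h1 h2]

lemma freq1 (k : ℕ) :
    (∑ t ∈ Finset.range (9 * 9 ^ (2 * k) - 1), (piSeq t).1) /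
      ((9 * 9 ^ (2 * k) - 1 : ℕ) : ℝ) ≤ 2 := by
  apply key _ _ (Nat.one_le_iff_ne_zero.mpr (by positivity)) (fun t => (pi_le9 t).1)
  intro t ht ht'
  have hp : piSeq t = ((1:ℝ), (9:ℝ)) := by
    rw [pi_eq (j := 2 * k) (by omega) (by rw [pow_succ]; omega), if_pos (even_two_mul k)]
  rw [hp]

lemma freq2 (k : ℕ) :
    (∑ t ∈ Finset.range (9 * 9 ^ (2 * k + 1) - 1), (piSeq t).2) /
      ((9 * 9 ^ (2 * k + 1) - 1 : ℕ) : ℝ) ≤ 2 := by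
  apply key _ _ (Nat.one_le_iff_ne_zero.mpr (by positivity)) (fun t => (pi_le9 t).2)
  intro t ht ht'
  have hp : piSeq t = ((9:ℝ), (1:ℝ)) := by
    rw [pi_eq (j := 2 * k + 1) (by omega) (by rw [pow_succ]; omega),
      if_neg (by simp [parity_simps])]
  rw [hp]

lemma big (N : ℕ) : N ≤ 9 ^ N - 1 := by
  have := Nat.lt_pow_self (n := N) (by norm_num : 1 < 9)
  omega

theorem stmt_14 :
    ∃ π : ℕ → ℝ × ℝ,
      (∀ t, π t = (9, 1) ∨ π t = (1, 9)) ∧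
      Filter.liminf (fun n : ℕ => (∑ t ∈ Finset.range n, (π t).1) / n) Filter.atTop ≤ 2 ∧
      Filter.liminf (fun n : ℕ => (∑ t ∈ Finset.range n, (π t).2) / n) Filter.atTop ≤ 2 := by
  have hnonneg : ∀ t, (0:ℝ) ≤ (piSeq t).1 ∧ (0:ℝ) ≤ (piSeq t).2 := by
    intro t; unfold piSeq; split <;> norm_num
  refine ⟨piSeq, fun t => ?_, ?_, ?_⟩
  · unfold piSeq; split <;> simp
  · apply Filter.liminf_le_of_frequently_le
    · rw [Filter.frequently_atTop]
      intro N
      refine ⟨9 * 9 ^ (2 * N) - 1, ?_, freq1 N⟩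
      have := big N
      have h2 : 9 ^ N ≤ 9 ^ (2 * N) := Nat.pow_le_pow_right (by norm_num) (by omega)
      omega
    · refine ⟨0, Filter.eventually_map.mpr (Filter.Eventually.of_forall fun n => ?_)⟩
      exact div_nonneg (Finset.sum_nonneg fun t _ => (hnonneg t).1) (Nat.cast_nonneg n)
  · apply Filter.liminf_le_of_frequently_le
    · rw [Filter.frequently_atTop]
      intro N
      refine ⟨9 * 9 ^ (2 * N + 1) - 1, ?_, freq2 N⟩
      have := big N
      have h2 : 9 ^ N ≤ 9 ^ (2 * N + 1) := Nat.pow_le_pow_right (by norm_num) (by omega)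
      omega
    · refine ⟨0, Filter.eventually_map.mpr (Filter.Eventually.of_forall fun n => ?_)⟩
      exact div_nonneg (Finset.sum_nonneg fun t _ => (hnonneg t).2) (Nat.cast_nonneg n)
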